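/- Let Δ > 0, let y₁, …, y_N be points in the unit square [0,1]² ⊆ ℝ² (with the Euclidean metric), and let r₁, …, r_N ≥ 0 be real numbers with (Δ/2)·r_i ≤ 1 for every i. If dist(y_i, y_j) ≥ (Δ/2)·(r_i + r_j) for all i ≠ j, then the open balls B(y_i, (Δ/2)r_i) are pairwise disjoint and ∑_{i=1}^{N} r_i² ≤ 36/(π Δ²). -/

import Mathlib

open MeasureTheory Metric

lemma coord_dist_le (z w : EuclideanSpace ℝ (Fin 2)) (j : Fin 2) :
    dist (z j) (w j) ≤ dist z w := by
  rw [EuclideanSpace.dist_eq]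
  rw [show dist (z j) (w j) = Real.sqrt (dist (z j) (w j) ^ 2) from
    (Real.sqrt_sq dist_nonneg).symm]
  apply Real.sqrt_le_sqrt
  exact Finset.single_le_sum (f := fun i => dist (z i) (w i) ^ 2)
    (fun i _ => sq_nonneg _) (Finset.mem_univ j)

lemma square_volume :
    volume {z : EuclideanSpace ℝ (Fin 2) | ∀ j, z j ∈ Set.Icc (-1 : ℝ) 2}
      = ENNReal.ofReal 9 := by
  have hmp := EuclideanSpace.volume_preserving_symm_measurableEquiv_toLp (Fin 2)
  have : {z : EuclideanSpace ℝ (Fin 2) | ∀ j, z j ∈ Set.Icc (-1 : ℝ) 2}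
      = (MeasurableEquiv.toLp 2 (Fin 2 → ℝ)).symm ⁻¹'
        (Set.univ.pi fun _ : Fin 2 => Set.Icc (-1 : ℝ) 2) := by
    ext z
    simp [Set.mem_pi, Pi.le_def, forall_and]
  rw [this, hmp.measure_preimage (MeasurableSet.univ_pi fun _ =>
    measurableSet_Icc).nullMeasurableSet, volume_pi_pi]
  simp [Real.volume_Icc]
  rw [← ENNReal.ofReal_pow (by norm_num)]
  norm_num

/-- Disk-packing step underlying the interference upper bound (Appendix A). -/
theorem disk_packing_bound
    (Δ : ℝ) (hΔ : 0 < Δ)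
    (N : ℕ) (y : Fin N → EuclideanSpace ℝ (Fin 2)) (r : Fin N → ℝ)
    (hy : ∀ i, ∀ j : Fin 2, y i j ∈ Set.Icc (0 : ℝ) 1)
    (hr : ∀ i, 0 ≤ r i)
    (hr1 : ∀ i, (Δ / 2) * r i ≤ 1)
    (hsep : ∀ i j, i ≠ j → dist (y i) (y j) ≥ (Δ / 2) * (r i + r j)) :
    (∀ i j, i ≠ j →
      Disjoint (Metric.ball (y i) ((Δ / 2) * r i)) (Metric.ball (y j) ((Δ / 2) * r j))) ∧
    ∑ i, (r i) ^ 2 ≤ 36 / (Real.pi * Δ ^ 2) := by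
  set ρ : Fin N → ℝ := fun i => (Δ / 2) * r i with hρ
  have hρnn : ∀ i, 0 ≤ ρ i := fun i => mul_nonneg (by positivity) (hr i)
  have hdisj : ∀ i j, i ≠ j → Disjoint (ball (y i) (ρ i)) (ball (y j) (ρ j)) := by
    intro i j hij
    apply ball_disjoint_ball
    have := hsep i j hij
    rw [mul_add] at this
    exact this
  refine ⟨hdisj, ?_⟩
  -- containment in the square [-1,2]^2
  set S : Set (EuclideanSpace ℝ (Fin 2)) := {z | ∀ j, z j ∈ Set.Icc (-1 : ℝ) 2}
  have hsub : ∀ i, ball (y i) (ρ i) ⊆ S := by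
    intro i z hz j
    have h1 : dist (z j) (y i j) ≤ dist z (y i) := coord_dist_le z (y i) j
    have h2 : dist z (y i) < ρ i := mem_ball.mp hz
    have hρ1 : ρ i ≤ 1 := hr1 i
    have := (hy i j)
    rw [Real.dist_eq] at h1
    have habs : |z j - y i j| < 1 := lt_of_le_of_lt h1 (lt_of_lt_of_le h2 hρ1)
    rw [abs_lt] at habs
    constructor <;> [linarith [this.1]; linarith [this.2]]
  -- measure comparison
  have hvol : ∑ i, volume (ball (y i) (ρ i)) ≤ ENNReal.ofReal 9 := by
    rw [← square_volume]
    have : ∑ i, volume (ball (y i) (ρ i))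
        = volume (⋃ i ∈ Finset.univ, ball (y i) (ρ i)) := by
      rw [measure_biUnion_finset]
      · intro i _ j _ hij
        exact hdisj i j hij
      · intro i _; exact measurableSet_ball
    rw [this]
    apply measure_mono
    intro z hz
    simp only [Set.mem_iUnion] at hz
    obtain ⟨i, _, hzi⟩ := hz
    exact hsub i hzi
  have hballvol : ∀ i, volume (ball (y i) (ρ i))
      = ENNReal.ofReal (Real.pi * ρ i ^ 2) := by
    intro i
    rw [EuclideanSpace.volume_ball]
    simp only [Fintype.card_fin]
    rw [show ((2:ℕ):ℝ)/2 + 1 = 2 by norm_num, Real.Gamma_two, div_one]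
    rw [← ENNReal.ofReal_pow (hρnn i), ← ENNReal.ofReal_mul (by positivity)]
    congr 1
    rw [Real.sq_sqrt Real.pi_pos.le]
    ring
  -- convert to real inequality
  have hreal : Real.pi * ∑ i, ρ i ^ 2 ≤ 9 := by
    have : ∑ i, ENNReal.ofReal (Real.pi * ρ i ^ 2) ≤ ENNReal.ofReal 9 := by
      simp only [hballvol] at hvol
      exact hvol
    rw [← ENNReal.ofReal_sum_of_nonneg (fun i _ => by positivity)] at this
    have := (ENNReal.ofReal_le_ofReal_iff (by norm_num)).mp this
    rw [← Finset.mul_sum] at this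
    exact this
  have hρsum : ∑ i, ρ i ^ 2 = (Δ / 2) ^ 2 * ∑ i, r i ^ 2 := by
    rw [Finset.mul_sum]
    exact Finset.sum_congr rfl fun i _ => by rw [hρ]; ring
  rw [hρsum] at hreal
  have hπ : (0 : ℝ) < Real.pi := Real.pi_pos
  rw [le_div_iff₀ (by positivity)]
  nlinarith [Finset.sum_nonneg fun i (_ : i ∈ Finset.univ) => sq_nonneg (r i)]
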